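/- arXiv:0804.0377 — 6 statements merged into one kernel-verified Lean document; each statement's English description precedes it below -/
import Mathlib

section
/- Let p > 1, h > 0 and 0 < ε < 1/(2√(p-1)). Then the equation ε²z² - z - 1 + p·exp(-z·h) = 0 has at least two real roots λ₁(ε), λ∞(ε) satisfying 0 < λ₁(ε) < 2(p-1) and ε⁻² - 2(p-1) < λ∞(ε) < ε⁻² + 1. -/
theorem two_real_roots_perturbed_char (p h ε : ℝ) (hp : 1 < p) (hh : 0 < h)
    (hε : 0 < ε) (hε' : ε < 1 / (2 * Real.sqrt (p - 1))) :
    ∃ lam1 lamInf : ℝ,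
      ε ^ 2 * lam1 ^ 2 - lam1 - 1 + p * Real.exp (-lam1 * h) = 0 ∧
      ε ^ 2 * lamInf ^ 2 - lamInf - 1 + p * Real.exp (-lamInf * h) = 0 ∧
      0 < lam1 ∧ lam1 < 2 * (p - 1) ∧
      ε ^ (-2 : ℤ) - 2 * (p - 1) < lamInf ∧ lamInf < ε ^ (-2 : ℤ) + 1 := by
  set f : ℝ → ℝ := fun z => ε ^ 2 * z ^ 2 - z - 1 + p * Real.exp (-z * h) with hf
  have hcont : Continuous f := by
    apply Continuous.add
    · fun_prop
    · exact continuous_const.mul (Real.continuous_exp.comp (by fun_prop))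
  have hp1 : (0:ℝ) < p - 1 := by linarith
  have hs : Real.sqrt (p - 1) > 0 := Real.sqrt_pos.mpr hp1
  have hsq : ε ^ 2 * (4 * (p - 1)) < 1 := by
    have h1 : ε * (2 * Real.sqrt (p - 1)) < 1 := by
      rw [lt_div_iff₀ (by positivity)] at hε'
      linarith
    have h2 : Real.sqrt (p - 1) ^ 2 = p - 1 := Real.sq_sqrt hp1.le
    nlinarith [mul_pos hε (by positivity : (0:ℝ) < 2 * Real.sqrt (p - 1))]
  have hε2 : (0:ℝ) < ε ^ 2 := by positivity
  have hz : ε ^ (-2 : ℤ) = (ε ^ 2)⁻¹ := by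
    rw [zpow_neg, zpow_two, pow_two]
  -- first root
  have hf0 : f 0 = p - 1 := by simp [hf]; ring
  have hfb : f (2 * (p - 1)) < 0 := by
    have he : Real.exp (-(2 * (p - 1)) * h) < 1 := by
      rw [Real.exp_lt_one_iff]
      nlinarith
    have hb : ε ^ 2 * (2 * (p - 1)) ^ 2 < p - 1 := by nlinarith
    have := mul_lt_mul_of_pos_left he (by positivity : (0:ℝ) < p)
    simp only [hf]
    nlinarith
  have hab : (0:ℝ) < 2 * (p - 1) := by linarith
  obtain ⟨lam1, hmem1, hroot1⟩ :=
    intermediate_value_Ioo' hab.le hcont.continuousOn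
      (by rw [hf0]; exact ⟨hfb, by linarith⟩ : (0:ℝ) ∈ Set.Ioo (f (2 * (p - 1))) (f 0))
  -- second root
  have hinv : ε ^ 2 * (ε ^ 2)⁻¹ = 1 := mul_inv_cancel₀ (ne_of_gt hε2)
  have hinvbig : (ε ^ 2)⁻¹ > 4 * (p - 1) := by
    rw [gt_iff_lt, lt_inv_comm₀ (by positivity) hε2]
    calc ε ^ 2 < 1 / (4 * (p-1)) := by
          rw [lt_div_iff₀ (by positivity)]; linarith [hsq]
      _ = (4 * (p-1))⁻¹ := one_div _
  have hapos : 0 < (ε ^ 2)⁻¹ - 2 * (p - 1) := by nlinarith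
  have hlt : ε ^ 2 * (2 * (p-1))^2 < p - 1 := by nlinarith
  have hfa : f ((ε ^ 2)⁻¹ - 2 * (p - 1)) < 0 := by
    have he : Real.exp (-((ε ^ 2)⁻¹ - 2 * (p - 1)) * h) < 1 := by
      rw [Real.exp_lt_one_iff]; nlinarith
    have h2 := mul_lt_mul_of_pos_left he (by positivity : (0:ℝ) < p)
    have hcomp : ε ^ 2 * ((ε ^ 2)⁻¹ - 2 * (p - 1)) ^ 2
        = (ε ^ 2)⁻¹ - 4 * (p - 1) + ε ^ 2 * (2 * (p-1))^2 := by
      field_simp; ring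
    simp only [hf]
    linarith [h2, hcomp, hlt]
  have hfbpos : 0 < f ((ε ^ 2)⁻¹ + 1) := by
    have he : 0 < Real.exp (-((ε ^ 2)⁻¹ + 1) * h) := Real.exp_pos _
    have hcomp : ε ^ 2 * ((ε ^ 2)⁻¹ + 1) ^ 2 = (ε ^ 2)⁻¹ + 2 + ε ^ 2 := by
      field_simp; ring
    simp only [hf]
    linarith [hcomp, hε2, mul_pos (by positivity : (0:ℝ) < p) he]
  have habl : (ε ^ 2)⁻¹ - 2 * (p - 1) < (ε ^ 2)⁻¹ + 1 := by nlinarith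
  obtain ⟨lamInf, hmem2, hroot2⟩ :=
    intermediate_value_Ioo habl.le hcont.continuousOn
      (⟨hfa, hfbpos⟩ : (0:ℝ) ∈ Set.Ioo (f ((ε ^ 2)⁻¹ - 2 * (p - 1))) (f ((ε ^ 2)⁻¹ + 1)))
  exact ⟨lam1, lamInf, hroot1, hroot2, hmem1.1, hmem1.2,
    by rw [hz]; exact hmem2.1, by rw [hz]; exact hmem2.2⟩
end

section
/- Let p > 1, h > 0 and 0 < ε < 1/(2√(p-1)). Then every real root z of ε²z² - z - 1 + p·exp(-z·h) = 0 is positive. -/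
theorem real_roots_positive (p h ε : ℝ) (hp : 1 < p) (hh : 0 < h)
    (hε : 0 < ε) (hε' : ε < 1 / (2 * Real.sqrt (p - 1))) :
    ∀ z : ℝ, ε ^ 2 * z ^ 2 - z - 1 + p * Real.exp (-z * h) = 0 → 0 < z := by
  intro z hz
  by_contra hle
  push_neg at hle
  have h1 : (1 : ℝ) ≤ Real.exp (-z * h) := by
    apply Real.one_le_exp
    nlinarith
  nlinarith [sq_nonneg (ε * z)]
end

section
/- Let p > 1, h > 0, and let λ be the unique positive real root of z = -1 + p·exp(-z·h). If ε > 0 is sufficiently small and λ₁(ε) is the smallest positive real root of ε²z² - z - 1 + p·exp(-z·h) = 0, then λ < λ₁(ε). -/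
theorem lambda_lt_lambda1 (p h lam : ℝ) (hp : 1 < p) (hh : 0 < h)
    (hlam_pos : 0 < lam) (hlam : lam = -1 + p * Real.exp (-lam * h)) :
    ∃ ε₀ > 0, ∀ ε : ℝ, 0 < ε → ε < ε₀ →
      ∀ lam1 : ℝ, (0 < lam1 ∧
          ε ^ 2 * lam1 ^ 2 - lam1 - 1 + p * Real.exp (-lam1 * h) = 0 ∧
          ∀ z : ℝ, 0 < z → ε ^ 2 * z ^ 2 - z - 1 + p * Real.exp (-z * h) = 0 → lam1 ≤ z) →
        lam < lam1 := by
  refine ⟨1, one_pos, fun ε hε _ lam1 ⟨h1, h2, _⟩ => ?_⟩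
  by_contra hle
  push_neg at hle
  have hexp : Real.exp (-lam * h) ≤ Real.exp (-lam1 * h) := by
    apply Real.exp_le_exp.mpr
    nlinarith
  have hp0 : (0:ℝ) < p := by linarith
  have hsq : 0 < ε ^ 2 * lam1 ^ 2 := mul_pos (pow_pos hε 2) (pow_pos h1 2)
  have := mul_le_mul_of_nonneg_left hexp hp0.le
  linarith
end

section
/- Let p > 1 and h > 0. Every complex root z = x + iy with y ≠ 0 of z = -1 + p·exp(-z·h) satisfies Re z < λ, where λ is the unique real root of the equation. -/
theorem complex_roots_re_lt_lambda (p h lam : ℝ) (hp : 1 < p) (hh : 0 < h)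
    (hlam : lam = -1 + p * Real.exp (-lam * h)) :
    ∀ z : ℂ, z.im ≠ 0 → z = -1 + (p : ℂ) * Complex.exp (-z * (h : ℂ)) → z.re < lam := by
  intro z hy hz
  have hp0 : (0:ℝ) < p := by linarith
  have h1 : z + 1 = (p : ℂ) * Complex.exp (-z * (h : ℂ)) := by
    linear_combination hz
  have habs : ‖z + 1‖ = p * Real.exp (-z.re * h) := by
    rw [h1, norm_mul, Complex.norm_exp]
    simp [abs_of_pos hp0]
  have hsq : (z.re + 1) ^ 2 + z.im ^ 2 = (p * Real.exp (-z.re * h)) ^ 2 := by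
    have h2 := Complex.sq_norm (z + 1)
    rw [habs] at h2
    simp [Complex.normSq_apply, Complex.add_re, Complex.add_im] at h2
    ring_nf at h2 ⊢
    nlinarith [h2]
  have him : 0 < z.im ^ 2 := by positivity
  have hlt : z.re + 1 < p * Real.exp (-z.re * h) := by
    have hb : (0:ℝ) ≤ p * Real.exp (-z.re * h) := by positivity
    have : (z.re + 1) ^ 2 < (p * Real.exp (-z.re * h)) ^ 2 := by nlinarith
    exact lt_of_pow_lt_pow_left₀ 2 hb this
  by_contra hcon
  push_neg at hcon
  have hexp : Real.exp (-z.re * h) ≤ Real.exp (-lam * h) := by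
    apply Real.exp_le_exp.mpr
    nlinarith
  have : p * Real.exp (-z.re * h) ≤ p * Real.exp (-lam * h) := by
    exact mul_le_mul_of_nonneg_left hexp (le_of_lt hp0)
  nlinarith
end

section
/- Let μ ≥ 0, h > 0, and let q : ℝ → ℝ be continuous and bounded on (-∞, h]. For x with ‖x‖⁻_μ = sup_{s≤0} e^{-μs}|x(s)| < ∞, define (N x)(t) = ∫_{-∞}^{t} e^{-(t-s)} q(s) x(s-h) ds. Then for all t ≤ h, |(N x)(t)| ≤ (‖x‖⁻_μ · sup_{s ≤ h}|q(s)| / (1 + μ)) · e^{μ(t-h)}. -/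
open MeasureTheory

lemma exp_aux_integrableOn (c t : ℝ) (hc : 1 ≤ c) :
    IntegrableOn (fun s => Real.exp (c * s)) (Set.Iic t) := by
  refine ((integrableOn_exp_Iic t).const_mul (Real.exp ((c - 1) * |t|))).mono'
    (Continuous.aestronglyMeasurable (by continuity)) ?_
  filter_upwards [MeasureTheory.ae_restrict_mem measurableSet_Iic] with s hs
  have hs' : s ≤ t := hs
  have : c * s = (c - 1) * s + s := by ring
  rw [Real.norm_eq_abs, abs_of_pos (Real.exp_pos _), this, Real.exp_add]
  have h1 : (c - 1) * s ≤ (c - 1) * |t| := by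
    calc (c - 1) * s ≤ (c - 1) * t := by nlinarith
    _ ≤ (c - 1) * |t| := by nlinarith [le_abs_self t]
  exact mul_le_mul_of_nonneg_right (Real.exp_le_exp.2 h1) (Real.exp_pos s).le

lemma exp_aux_integral (c t : ℝ) (hc : 1 ≤ c) :
    ∫ s in Set.Iic t, Real.exp (c * s) = Real.exp (c * t) / c := by
  have hc0 : 0 < c := lt_of_lt_of_le one_pos hc
  have hderiv : ∀ s ∈ Set.Iic t, HasDerivAt (fun s => Real.exp (c * s) / c)
      (Real.exp (c * s)) s := by
    intro s _
    have := ((Real.hasDerivAt_exp (c * s)).comp s ((hasDerivAt_id s).const_mul c))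
    simpa [mul_comm, hc0.ne'] using this.div_const c
  have hlim : Filter.Tendsto (fun s => Real.exp (c * s) / c) Filter.atBot (nhds 0) := by
    have h1 : Filter.Tendsto (fun s : ℝ => c * s) Filter.atBot Filter.atBot :=
      Filter.tendsto_atBot_atBot.2 fun b => ⟨b / c, fun a ha => by
        rw [le_div_iff₀ hc0] at ha; linarith⟩
    simpa using (Real.tendsto_exp_atBot.comp h1).div_const c
  have := integral_Iic_of_hasDerivAt_of_tendsto' hderiv
    (exp_aux_integrableOn c t hc) hlim
  simpa using this

theorem N_operator_bound (μ h : ℝ) (hμ : 0 ≤ μ) (hh : 0 < h)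
    (q x : ℝ → ℝ) (hq : Continuous q) (hx : Continuous x)
    (K Q : ℝ)
    (hK : ∀ s : ℝ, s ≤ 0 → Real.exp (-μ * s) * |x s| ≤ K)
    (hQ : ∀ s : ℝ, s ≤ h → |q s| ≤ Q)
    (hint : ∀ t : ℝ, IntegrableOn
      (fun s => Real.exp (-(t - s)) * q s * x (s - h)) (Set.Iic t)) :
    ∀ t : ℝ, t ≤ h →
      |∫ s in Set.Iic t, Real.exp (-(t - s)) * q s * x (s - h)| ≤
        K * Q / (1 + μ) * Real.exp (μ * (t - h)) := by
  intro t ht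
  have hc : (1:ℝ) ≤ 1 + μ := by linarith
  have hc0 : (0:ℝ) < 1 + μ := by linarith
  have hK0 : 0 ≤ K := le_trans (by positivity) (hK 0 le_rfl)
  have hQ0 : 0 ≤ Q := le_trans (abs_nonneg _) (hQ 0 hh.le)
  -- bounding function
  set g : ℝ → ℝ := fun s => K * Q * Real.exp (-t - μ * h) * Real.exp ((1 + μ) * s) with hg
  have hgint : IntegrableOn g (Set.Iic t) :=
    (exp_aux_integrableOn (1 + μ) t hc).const_mul _
  have hbound : ∀ᵐ s ∂(volume.restrict (Set.Iic t)),
      ‖Real.exp (-(t - s)) * q s * x (s - h)‖ ≤ g s := by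
    filter_upwards [MeasureTheory.ae_restrict_mem measurableSet_Iic] with s hs
    have hs' : s ≤ t := hs
    have hsh : s - h ≤ 0 := by linarith
    have hxb : |x (s - h)| ≤ K * Real.exp (μ * (s - h)) := by
      have h2 := mul_le_mul_of_nonneg_left (hK (s - h) hsh) (Real.exp_pos (μ * (s - h))).le
      have h3 : Real.exp (μ * (s - h)) * (Real.exp (-μ * (s - h)) * |x (s - h)|)
          = |x (s - h)| := by
        rw [← mul_assoc, ← Real.exp_add]
        have : μ * (s - h) + -μ * (s - h) = 0 := by ring
        rw [this, Real.exp_zero, one_mul]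
      rw [h3] at h2
      linarith
    have hqb : |q s| ≤ Q := hQ s (le_trans hs' ht)
    rw [Real.norm_eq_abs, abs_mul, abs_mul, abs_of_pos (Real.exp_pos _)]
    have h1 : Real.exp (-(t - s)) * |q s| * |x (s - h)|
        ≤ Real.exp (-(t - s)) * Q * (K * Real.exp (μ * (s - h))) := by
      have e1 : Real.exp (-(t - s)) * |q s| ≤ Real.exp (-(t - s)) * Q :=
        mul_le_mul_of_nonneg_left hqb (Real.exp_pos _).le
      exact mul_le_mul e1 hxb (abs_nonneg _) (by positivity)
    refine h1.trans (le_of_eq ?_)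
    have e : Real.exp (-(t - s)) * Real.exp (μ * (s - h))
        = Real.exp (-t - μ * h) * Real.exp ((1 + μ) * s) := by
      rw [← Real.exp_add, ← Real.exp_add]
      congr 1; ring
    show Real.exp (-(t - s)) * Q * (K * Real.exp (μ * (s - h)))
        = K * Q * Real.exp (-t - μ * h) * Real.exp ((1 + μ) * s)
    linear_combination Q * K * e
  calc |∫ s in Set.Iic t, Real.exp (-(t - s)) * q s * x (s - h)|
      ≤ ∫ s in Set.Iic t, g s := by
        have := MeasureTheory.norm_integral_le_of_norm_le hgint hbound
        simpa [Real.norm_eq_abs] using this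
    _ = K * Q / (1 + μ) * Real.exp (μ * (t - h)) := by
        rw [hg]
        rw [MeasureTheory.integral_const_mul, exp_aux_integral (1 + μ) t hc]
        have e2 : Real.exp (-t - μ * h) * Real.exp ((1 + μ) * t)
            = Real.exp (μ * (t - h)) := by
          rw [← Real.exp_add]; congr 1; ring
        rw [div_eq_mul_inv, div_eq_mul_inv]
        linear_combination (K * Q * (1 + μ)⁻¹) * e2
end

section
/- Let α > 0, ε ≠ 0, and let P : [0, ∞) → ℝ be continuous and integrable. If v : [0, ∞) → ℝ is a C² solution of ε²v''(t) + αv'(t) = P(t), then for all t ≥ 0, |v(t)| ≤ |v(0)| + (ε²/α)|v'(0)|·(1 + e^{-αt/ε²}) + (1/α)∫₀^∞ |P(s)| ds. -/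
open MeasureTheory

lemma const_of_deriv_zero (G g : ℝ → ℝ) (hG : ∀ t, HasDerivAt G (g t) t)
    (hg : ∀ t, 0 < t → g t = 0) : ∀ t, 0 ≤ t → G t = G 0 := by
  have hdiff : Differentiable ℝ G := fun x => (hG x).differentiableAt
  have hcont : ContinuousOn G (Set.Ici 0) := hdiff.continuous.continuousOn
  have hdO : DifferentiableOn ℝ G (interior (Set.Ici (0:ℝ))) := hdiff.differentiableOn
  have hderiv : ∀ x ∈ interior (Set.Ici (0:ℝ)), deriv G x = 0 := by
    intro x hx
    rw [interior_Ici] at hx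
    rw [(hG x).deriv, hg x hx]
  have hmono : MonotoneOn G (Set.Ici (0:ℝ)) :=
    monotoneOn_of_deriv_nonneg (convex_Ici 0) hcont hdO (fun x hx => (hderiv x hx).ge)
  have hanti : AntitoneOn G (Set.Ici (0:ℝ)) :=
    antitoneOn_of_deriv_nonpos (convex_Ici 0) hcont hdO (fun x hx => (hderiv x hx).le)
  intro t ht
  exact le_antisymm (hanti Set.self_mem_Ici ht ht) (hmono Set.self_mem_Ici ht ht)

theorem apriori_bound (α ε : ℝ) (hα : 0 < α) (hε : ε ≠ 0)
    (P v : ℝ → ℝ) (hP : Continuous P) (hPint : IntegrableOn P (Set.Ici 0))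
    (hv : ContDiff ℝ 2 v)
    (heq : ∀ t : ℝ, 0 ≤ t → ε ^ 2 * deriv (deriv v) t + α * deriv v t = P t) :
    ∀ t : ℝ, 0 ≤ t →
      |v t| ≤ |v 0| + ε ^ 2 / α * |deriv v 0| * (1 + Real.exp (-α * t / ε ^ 2))
        + (1 / α) * ∫ s in Set.Ici (0 : ℝ), |P s| := by
  have hε2 : (0:ℝ) < ε ^ 2 := by positivity
  set c : ℝ := α / ε ^ 2 with hc
  have hcpos : 0 < c := by positivity
  have h2 : ContDiff ℝ (1 + 1) v := by norm_num; exact hv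
  have hdv : Differentiable ℝ v := (contDiff_succ_iff_deriv.mp h2).1
  have hdw : Differentiable ℝ (deriv v) :=
    ((contDiff_succ_iff_deriv.mp h2).2.2).differentiable one_ne_zero
  set w := deriv v with hwdef
  have hwD : ∀ t, HasDerivAt w (deriv w t) t := fun t => (hdw t).hasDerivAt
  have hvD : ∀ t, HasDerivAt v (w t) t := fun t => (hdv t).hasDerivAt
  have hcontE : Continuous fun s => Real.exp (c * s) * P s :=
    ((Real.continuous_exp.comp (continuous_const.mul continuous_id)).mul hP)
  set F : ℝ → ℝ := fun u => ∫ s in (0:ℝ)..u, Real.exp (c * s) * P s with hF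
  have hFD : ∀ t, HasDerivAt F (Real.exp (c * t) * P t) t := fun t =>
    intervalIntegral.integral_hasDerivAt_right (hcontE.intervalIntegrable 0 t)
      (hcontE.stronglyMeasurableAtFilter _ _) hcontE.continuousAt
  set I : ℝ → ℝ := fun u => ∫ s in (0:ℝ)..u, P s with hI
  have hID : ∀ t, HasDerivAt I (P t) t := fun t =>
    intervalIntegral.integral_hasDerivAt_right (hP.intervalIntegrable 0 t)
      (hP.stronglyMeasurableAtFilter _ _) hP.continuousAt
  have hexpD : ∀ t : ℝ, HasDerivAt (fun t => Real.exp (c * t)) (Real.exp (c * t) * c) t := by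
    intro t
    exact (((hasDerivAt_id t).const_mul c).exp).congr_deriv (by simp [mul_comm])
  have hGconst : ∀ t, 0 ≤ t →
      Real.exp (c * t) * w t - (ε ^ 2)⁻¹ * F t = w 0 := by
    have := const_of_deriv_zero
      (fun t => Real.exp (c * t) * w t - (ε ^ 2)⁻¹ * F t)
      (fun t => (Real.exp (c * t) * c * w t + Real.exp (c * t) * deriv w t)
        - (ε ^ 2)⁻¹ * (Real.exp (c * t) * P t))
      (fun t => ((hexpD t).mul (hwD t)).sub ((hFD t).const_mul _))
      (fun t ht => by
        have h : P t = ε ^ 2 * deriv w t + α * w t := (heq t ht.le).symm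
        show Real.exp (c * t) * c * w t + Real.exp (c * t) * deriv w t
          - (ε ^ 2)⁻¹ * (Real.exp (c * t) * P t) = 0
        rw [h, hc]
        field_simp
        ring)
    intro t ht
    have h0 := this t ht
    simpa [F, intervalIntegral.integral_same] using h0
  have hHconst : ∀ t, 0 ≤ t →
      ε ^ 2 * w t + α * v t - I t = ε ^ 2 * w 0 + α * v 0 := by
    have := const_of_deriv_zero
      (fun t => ε ^ 2 * w t + α * v t - I t)
      (fun t => (ε ^ 2 * deriv w t + α * w t) - P t)
      (fun t => (((hwD t).const_mul _).add ((hvD t).const_mul _)).sub (hID t))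
      (fun t ht => by
        show ε ^ 2 * deriv w t + α * w t - P t = 0
        rw [heq t ht.le]; ring)
    intro t ht
    have h0 := this t ht
    simpa [I, intervalIntegral.integral_same] using h0
  intro t ht
  set E : ℝ := Real.exp (-α * t / ε ^ 2) with hE
  have hEeq : E = (Real.exp (c * t))⁻¹ := by
    rw [hE, ← Real.exp_neg]
    congr 1
    rw [hc]
    field_simp
  have hEpos : 0 < E := Real.exp_pos _
  have hEle : E ≤ 1 := by
    rw [hE]
    apply Real.exp_le_one_iff.mpr
    apply div_nonpos_of_nonpos_of_nonneg _ hε2.le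
    exact mul_nonpos_of_nonpos_of_nonneg (by linarith) ht
  have hexpne : Real.exp (c * t) ≠ 0 := (Real.exp_pos _).ne'
  have hGt := hGconst t ht
  have hHt := hHconst t ht
  have h1 : Real.exp (c * t) * w t = w 0 + (ε ^ 2)⁻¹ * F t := by linarith
  have hEexp : E * Real.exp (c * t) = 1 := by rw [hEeq]; field_simp
  have hwt : ε ^ 2 * w t = ε ^ 2 * E * w 0 + E * F t := by
    calc ε ^ 2 * w t = ε ^ 2 * (E * Real.exp (c * t)) * w t := by rw [hEexp]; ring
      _ = ε ^ 2 * E * (Real.exp (c * t) * w t) := by ring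
      _ = ε ^ 2 * E * (w 0 + (ε ^ 2)⁻¹ * F t) := by rw [h1]
      _ = ε ^ 2 * E * w 0 + E * F t := by field_simp
  have hαvt : α * v t = α * v 0 + ε ^ 2 * w 0 * (1 - E) + (I t - E * F t) := by
    linear_combination hHt - hwt
  -- bound the remainder
  have hRb : |I t - E * F t| ≤ ∫ s in (0:ℝ)..t, |P s| := by
    have hEF : E * F t = ∫ s in (0:ℝ)..t, E * (Real.exp (c * s) * P s) := by
      rw [hF]; exact (intervalIntegral.integral_const_mul E _).symm
    have hR : I t - E * F t = ∫ s in (0:ℝ)..t, (P s - E * (Real.exp (c * s) * P s)) := by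
      rw [hEF, hI]
      exact (intervalIntegral.integral_sub (hP.intervalIntegrable 0 t)
        ((continuous_const.mul hcontE).intervalIntegrable 0 t)).symm
    rw [hR]
    have hmajor : ∀ s ∈ Set.Icc (0:ℝ) t,
        |P s - E * (Real.exp (c * s) * P s)| ≤ |P s| := by
      intro s hs
      have hx1 : E * Real.exp (c * s) ≤ 1 := by
        rw [hEeq]
        rw [inv_mul_le_iff₀ (Real.exp_pos _)]
        simpa using Real.exp_le_exp.mpr (by nlinarith [hs.2, hcpos] : c * s ≤ c * t)
      have hx0 : 0 ≤ E * Real.exp (c * s) := by positivity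
      have : P s - E * (Real.exp (c * s) * P s) = P s * (1 - E * Real.exp (c * s)) := by ring
      rw [this, abs_mul]
      nlinarith [abs_nonneg (P s), abs_of_nonneg (by linarith : (0:ℝ) ≤ 1 - E * Real.exp (c * s))]
    calc |∫ s in (0:ℝ)..t, (P s - E * (Real.exp (c * s) * P s))|
        ≤ ∫ s in (0:ℝ)..t, |P s - E * (Real.exp (c * s) * P s)| :=
          intervalIntegral.abs_integral_le_integral_abs ht
      _ ≤ ∫ s in (0:ℝ)..t, |P s| := by
          apply intervalIntegral.integral_mono_on ht
            ((hP.sub (continuous_const.mul hcontE)).abs.intervalIntegrable 0 t)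
            (hP.abs.intervalIntegrable 0 t) hmajor
  have hJ : ∫ s in (0:ℝ)..t, |P s| ≤ ∫ s in Set.Ici (0:ℝ), |P s| := by
    rw [intervalIntegral.integral_of_le ht]
    exact setIntegral_mono_set hPint.abs
      (Filter.Eventually.of_forall fun s => abs_nonneg _)
      (HasSubset.Subset.eventuallyLE (Set.Ioc_subset_Icc_self.trans Set.Icc_subset_Ici_self))
  set J : ℝ := ∫ s in Set.Ici (0:ℝ), |P s| with hJdef
  have hstep : |α * v t| ≤ α * |v 0| + ε ^ 2 * |w 0| * (1 + E) + J := by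
    rw [hαvt]
    calc |α * v 0 + ε ^ 2 * w 0 * (1 - E) + (I t - E * F t)|
        ≤ |α * v 0| + |ε ^ 2 * w 0 * (1 - E)| + |I t - E * F t| := abs_add_three _ _ _
      _ ≤ α * |v 0| + ε ^ 2 * |w 0| * (1 + E) + J := by
          have e1 : |α * v 0| = α * |v 0| := by rw [abs_mul, abs_of_pos hα]
          have e2 : |ε ^ 2 * w 0 * (1 - E)| = ε ^ 2 * |w 0| * (1 - E) := by
            rw [abs_mul, abs_mul, abs_of_pos hε2, abs_of_nonneg (by linarith : (0:ℝ) ≤ 1 - E)]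
          have e3 : ε ^ 2 * |w 0| * (1 - E) ≤ ε ^ 2 * |w 0| * (1 + E) := by
            nlinarith [mul_nonneg (mul_nonneg hε2.le (abs_nonneg (w 0))) hEpos.le]
          have e4 : |I t - E * F t| ≤ J := hRb.trans hJ
          rw [e1, e2]
          linarith
  have hfin : α * |v t| ≤ α * |v 0| + ε ^ 2 * |w 0| * (1 + E) + J := by
    rwa [abs_mul, abs_of_pos hα] at hstep
  have hrhs : |v 0| + ε ^ 2 / α * |w 0| * (1 + E) + 1 / α * J
      = (α * |v 0| + ε ^ 2 * |w 0| * (1 + E) + J) / α := by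
    field_simp
  rw [hrhs, le_div_iff₀ hα]
  linarith
end
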